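/- There exist a convex body K ⊆ ℝ³ and a countable set V ⊆ ℝ³ such that the family 𝓕 = {K + v : v ∈ V} of translates of K has infinite dual VC-dimension; that is, for every k ∈ ℕ there exist distinct v₁, …, v_k ∈ V such that for every subset S ⊆ {1, …, k} there is a point x ∈ ℝ³ with x ∈ K + vᵢ if and only if i ∈ S. -/

import Mathlib

set_option maxHeartbeats 1000000

open Pointwise

noncomputable section

namespace DualVCAux

abbrev E3 := EuclideanSpace ℝ (Fin 3)

/-- explicit points of `ℝ³` -/
def pt (a b c : ℝ) : E3 := WithLp.toLp 2 ![a, b, c]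

lemma pt_zero (a b c : ℝ) : pt a b c 0 = a := rfl
lemma pt_one (a b c : ℝ) : pt a b c 1 = b := rfl
lemma pt_two (a b c : ℝ) : pt a b c 2 = c := rfl

lemma add_apply (p q : E3) (j : Fin 3) : (p + q) j = p j + q j := rfl
lemma smul_apply (c : ℝ) (p : E3) (j : Fin 3) : (c • p) j = c * p j := rfl
lemma zero_apply (j : Fin 3) : (0 : E3) j = 0 := rfl

lemma pt_add (a b c a' b' c' : ℝ) :
    pt a b c + pt a' b' c' = pt (a + a') (b + b') (c + c') := by
  apply PiLp.ext
  intro j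
  fin_cases j <;> rfl

lemma pt_congr {a b c a' b' c' : ℝ} (h1 : a = a') (h2 : b = b') (h3 : c = c') :
    pt a b c = pt a' b' c' := by rw [h1, h2, h3]

/-- a global index for the gadgets `(k, S)` -/
def gidx (k : ℕ) (S : Finset (Fin k)) : ℕ :=
  Encodable.encode (⟨k, S⟩ : Σ n, Finset (Fin n))

lemma gidx_injective {k k' : ℕ} {S : Finset (Fin k)} {S' : Finset (Fin k')}
    (h : gidx k' S' = gidx k S) : k' = k ∧ HEq S' S := by
  have h2 : (⟨k', S'⟩ : Σ n, Finset (Fin n)) = ⟨k, S⟩ := Encodable.encode_injective h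
  refine ⟨congrArg Sigma.fst h2, ?_⟩
  cases h2
  rfl

/-- maximum of the gadget indices at level `k` -/
def Mk (k : ℕ) : ℕ := Finset.univ.sup (fun S : Finset (Fin k) => gidx k S)

def Nk (k : ℕ) : ℕ := k + 3 + 2 * Mk k

/-- the scale of the configuration at level `k` -/
def tau (k : ℕ) : ℝ := ((2 : ℝ) ^ Nk k)⁻¹

/-- basic scale of gadget `m` -/
def bb (m : ℕ) : ℝ := ((2 : ℝ) ^ m)⁻¹

lemma tau_pos (k : ℕ) : 0 < tau k := by
  have : (0:ℝ) < (2 : ℝ) ^ Nk k := by positivity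
  exact inv_pos.mpr this

lemma tau_le_one (k : ℕ) : tau k ≤ 1 := by
  rw [tau]
  exact inv_le_one_of_one_le₀ (one_le_pow₀ (by norm_num : (1:ℝ) ≤ 2))

lemma bb_pos (m : ℕ) : 0 < bb m := by
  have : (0:ℝ) < (2 : ℝ) ^ m := by positivity
  exact inv_pos.mpr this

lemma bb_le_one (m : ℕ) : bb m ≤ 1 := by
  rw [bb]
  exact inv_le_one_of_one_le₀ (one_le_pow₀ (by norm_num : (1:ℝ) ≤ 2))

/-- the parameter of the `i`-th test point at level `k` -/
def tval (k : ℕ) (i : Fin k) : ℝ := ((i : ℕ) + 1) * tau k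

/-- a bump generator -/
def gen (m : ℕ) (t : ℝ) : E3 := pt t (t ^ 2 + bb m ^ 2) (bb m)

/-- the translation vectors -/
def vpt (k n : ℕ) : E3 :=
  pt (-(((n : ℝ) + 1) * tau k)) (-((((n : ℝ) + 1) * tau k) ^ 2)) 0

/-- the witness point for gadget `m` -/
def xx (m : ℕ) : E3 := pt 0 (bb m ^ 2) (bb m)

/-- center of the interior cube -/
def cb : E3 := pt 0 2 (-2)

/-- generators of the convex body -/
def G : Set E3 :=
  {p | ∃ (k : ℕ) (S : Finset (Fin k)) (j : Fin k),
        j ∈ S ∧ p = gen (gidx k S) (tval k j)}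
    ∪ Metric.closedBall cb (1/4)

/-- the convex body -/
def KK : Set E3 := closure (convexHull ℝ G)

/-- the countable set of translations -/
def VV : Set E3 := Set.range (fun q : ℕ × ℕ => vpt q.1 q.2)

/- ### elementary estimates -/

lemma ktau_le (k : ℕ) (S : Finset (Fin k)) :
    (k : ℝ) * tau k ≤ bb (gidx k S) ^ 2 / 8 := by
  set m := gidx k S with hm
  have hmM : m ≤ Mk k := Finset.le_sup (f := fun S : Finset (Fin k) => gidx k S)
    (Finset.mem_univ S)
  have hnat : k * (8 * 2 ^ m * 2 ^ m) ≤ 2 ^ Nk k := by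
    have h1 : k ≤ 2 ^ k := (Nat.lt_two_pow_self (n := k)).le
    have h2 : (2:ℕ) ^ m ≤ 2 ^ Mk k := Nat.pow_le_pow_right (by norm_num) hmM
    calc k * (8 * 2 ^ m * 2 ^ m) ≤ 2 ^ k * (8 * 2 ^ Mk k * 2 ^ Mk k) := by
          apply Nat.mul_le_mul h1
          apply Nat.mul_le_mul (Nat.mul_le_mul_left _ h2) h2
      _ = 2 ^ Nk k := by
          rw [Nk]
          ring_nf
  have hreal : (k : ℝ) * (8 * 2 ^ m * 2 ^ m) ≤ 2 ^ Nk k := by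
    exact_mod_cast hnat
  have h2m : (0:ℝ) < 2 ^ m := by positivity
  have h2N : (0:ℝ) < 2 ^ Nk k := by positivity
  rw [tau, bb]
  have goal' : (k:ℝ) / 2 ^ Nk k ≤ 1 / (8 * (2 ^ m) ^ 2) := by
    rw [div_le_div_iff₀ h2N (by positivity)]
    nlinarith [hreal]
  calc (k:ℝ) * ((2:ℝ) ^ Nk k)⁻¹ = (k:ℝ) / 2 ^ Nk k := by ring
    _ ≤ 1 / (8 * (2 ^ m) ^ 2) := goal'
    _ = ((2:ℝ) ^ m)⁻¹ ^ 2 / 8 := by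
        field_simp

lemma tval_nonneg (k : ℕ) (i : Fin k) : 0 ≤ tval k i := by
  have h : (0:ℝ) ≤ ((i : ℕ) : ℝ) + 1 := by positivity
  exact mul_nonneg h (tau_pos k).le

lemma tval_le (k : ℕ) (S : Finset (Fin k)) (i : Fin k) :
    tval k i ≤ bb (gidx k S) ^ 2 / 8 := by
  refine le_trans ?_ (ktau_le k S)
  rw [tval]
  apply mul_le_mul_of_nonneg_right _ (tau_pos k).le
  exact_mod_cast Nat.succ_le_of_lt i.isLt

lemma tval_le_eighth (k : ℕ) (S : Finset (Fin k)) (i : Fin k) :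
    tval k i ≤ 1 / 8 := by
  refine le_trans (tval_le k S i) ?_
  have h1 := bb_le_one (gidx k S)
  have h2 := bb_pos (gidx k S)
  nlinarith

/- ### geometry of the generating set -/

lemma coord_le_dist (p q : E3) (j : Fin 3) : |p j - q j| ≤ dist p q := by
  rw [EuclideanSpace.dist_eq, ← Real.sqrt_sq_eq_abs]
  apply Real.sqrt_le_sqrt
  have := Finset.single_le_sum (f := fun i => dist (p i) (q i) ^ 2)
    (fun i _ => sq_nonneg _) (Finset.mem_univ j)
  simpa [Real.dist_eq] using this

lemma gen_mem_KK (k : ℕ) (S : Finset (Fin k)) (i : Fin k) (hi : i ∈ S) :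
    gen (gidx k S) (tval k i) ∈ KK :=
  subset_closure (subset_convexHull ℝ G (Or.inl ⟨k, S, i, hi, rfl⟩))

lemma gen_add_vpt (k : ℕ) (m : ℕ) (i : Fin k) :
    gen m (tval k i) + vpt k (i : ℕ) = xx m := by
  rw [gen, vpt, xx, pt_add]
  exact pt_congr (by rw [tval]; ring) (by rw [tval]; ring) (by ring)

/- ### the separation argument -/

lemma combinA (K : ℕ) (iv jv : ℕ) (hik : iv < K) (hjk : jv < K) (hij : jv ≠ iv) :
    (K:ℝ) ≤ 3*(K:ℝ)*(((iv:ℝ)+1) - ((jv:ℝ)+1))^2 + ((jv:ℝ)+1)^2 - ((iv:ℝ)+1)^2 := by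
  set u : ℝ := (iv:ℝ) with hu
  set w : ℝ := (jv:ℝ) with hw
  have hu1 : u + 1 ≤ (K:ℝ) := by rw [hu]; exact_mod_cast hik
  have hw1 : w + 1 ≤ (K:ℝ) := by rw [hw]; exact_mod_cast hjk
  have hunn : 0 ≤ u := by rw [hu]; positivity
  have hwnn : 0 ≤ w := by rw [hw]; positivity
  have hKnn : (0:ℝ) ≤ (K:ℝ) := by positivity
  rcases Nat.lt_or_ge iv jv with hlt | hge
  · have h1 : u + 1 ≤ w := by
      rw [hu, hw]; exact_mod_cast Nat.succ_le_of_lt hlt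
    have hP : (0:ℝ) ≤ (w - u - 1) * (w - u + 1) := mul_nonneg (by linarith) (by linarith)
    have hQ : (0:ℝ) ≤ (w - u) * (w + u + 2) := mul_nonneg (by linarith) (by linarith)
    nlinarith [mul_nonneg hKnn hP, hQ, hKnn]
  · have hlt : jv < iv := lt_of_le_of_ne hge hij
    have h1 : w + 1 ≤ u := by
      rw [hu, hw]; exact_mod_cast Nat.succ_le_of_lt hlt
    have h2K : u + w + 2 ≤ 2 * (K:ℝ) := by linarith
    have hP : (0:ℝ) ≤ (u - w - 1) * (3 * (u - w) + 1) := mul_nonneg (by linarith) (by linarith)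
    have h3 : (u - w) * (u + w + 2) ≤ (u - w) * (2 * (K:ℝ)) :=
      mul_le_mul_of_nonneg_left h2K (by linarith)
    nlinarith [mul_nonneg hKnn hP, h3, hKnn]

lemma exclusion (k : ℕ) (S : Finset (Fin k)) (i : Fin k) (hi : i ∉ S) :
    gen (gidx k S) (tval k i) ∉ KK := by
  intro hq
  set m := gidx k S with hm
  set b := bb m with hbdef
  set t := tval k i with htdef
  set C : ℝ := 3 * (k : ℝ) + 1 with hC
  have hk1 : (1 : ℝ) ≤ (k : ℝ) := by exact_mod_cast i.pos
  have hC4 : (4:ℝ) ≤ C := by rw [hC]; linarith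
  have hbpos : 0 < b := bb_pos m
  have hble : b ≤ 1 := bb_le_one m
  have htnn : 0 ≤ t := tval_nonneg k i
  have htle : t ≤ b ^ 2 / 8 := tval_le k S i
  have hτpos := tau_pos k
  have hτle := tau_le_one k
  set lam : E3 → ℝ :=
    fun p => 2*b*C*(p 2) - C*(p 1) + 6*(k:ℝ)*t*(p 0) with hlam
  set δ : ℝ := (k:ℝ) * tau k ^ 2 with hδ
  have hδpos : 0 < δ := by
    rw [hδ]; positivity
  have hδle : δ ≤ b ^ 2 / 8 := by
    have h1 : (k:ℝ) * tau k ≤ b ^ 2 / 8 := ktau_le k S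
    calc δ = ((k:ℝ) * tau k) * tau k := by rw [hδ]; ring
      _ ≤ (b ^ 2 / 8) * 1 := by
          apply mul_le_mul h1 hτle hτpos.le (by positivity)
      _ = b ^ 2 / 8 := by ring
  -- value of lam at the query point
  have hlamq : lam (gen m t) = C * b ^ 2 + (3*(k:ℝ) - 1) * t ^ 2 := by
    rw [hlam]
    simp only [gen, pt_zero, pt_one, pt_two]
    ring
  -- every generator is below the hyperplane
  have hG : ∀ p ∈ G, lam p ≤ lam (gen m t) - δ := by
    rintro p (⟨k', S', j, hjS', rfl⟩ | hcube)
    · -- a bump generator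
      set T := gidx k' S' with hT
      set t' := tval k' j with ht'def
      have ht'nn : 0 ≤ t' := tval_nonneg k' j
      have hΔ : lam (gen m t) - lam (gen T t')
          = C * (b - bb T)^2 + 3*(k:ℝ)*(t - t')^2 + (t'^2 - t^2) := by
        rw [hlam]
        simp only [gen, pt_zero, pt_one, pt_two]
        ring
      rcases eq_or_ne T m with hTm | hTm
      · -- same gadget
        obtain ⟨hk2, hS2⟩ := gidx_injective (hTm : gidx k' S' = gidx k S)
        subst hk2
        have hSS : S' = S := eq_of_heq hS2
        rw [hSS] at hjS'
        have hij : (j : ℕ) ≠ (i : ℕ) := by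
          intro h
          exact hi (Fin.ext h ▸ hjS')
        have hA := combinA _ (i : ℕ) (j : ℕ) i.isLt j.isLt hij
        have hbT : bb T = b := by rw [hTm]
        have hkey : lam (gen m t) - lam (gen T t') ≥ δ := by
          rw [hΔ, hbT, sub_self]
          have htt : t = (((i:ℕ):ℝ) + 1) * tau k' := by rw [htdef]; rfl
          have htt' : t' = (((j:ℕ):ℝ) + 1) * tau k' := by rw [ht'def]; rfl
          rw [htt, htt', hδ]
          have expand : C * (0:ℝ)^2 +
              3*((k':ℕ):ℝ)*((((i:ℕ):ℝ)+1)*tau k' - (((j:ℕ):ℝ)+1)*tau k')^2 +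
              (((((j:ℕ):ℝ)+1)*tau k')^2 - ((((i:ℕ):ℝ)+1)*tau k')^2)
              = (3*((k':ℕ):ℝ)*((((i:ℕ):ℝ)+1) - (((j:ℕ):ℝ)+1))^2 +
                  (((j:ℕ):ℝ)+1)^2 - (((i:ℕ):ℝ)+1)^2) * tau k' ^ 2 := by
            ring
          rw [expand]
          have h2 := mul_le_mul_of_nonneg_right hA (sq_nonneg (tau k'))
          linarith [h2]
        linarith [hkey]
      · -- a different gadget
        have hsq : (b - bb T)^2 ≥ b^2/4 := by
          rcases Nat.lt_or_ge T m with hTltm | hTge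
          · -- T < m : bb T ≥ 2 b
            have h1 : (2:ℝ) ^ (T + 1) ≤ 2 ^ m := by
              apply pow_le_pow_right₀ (by norm_num : (1:ℝ) ≤ 2)
              omega
            have h2 : (0:ℝ) < 2 ^ (T+1) := by positivity
            have h3 : ((2:ℝ) ^ m)⁻¹ ≤ ((2:ℝ) ^ (T+1))⁻¹ :=
              inv_anti₀ h2 h1
            have h4 : ((2:ℝ) ^ (T+1))⁻¹ = ((2:ℝ)^T)⁻¹ / 2 := by
              rw [pow_succ, mul_inv]
              ring
            have h5 : 2 * b ≤ bb T := by
              rw [hbdef, bb, bb]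
              rw [h4] at h3
              linarith
            nlinarith [hbpos]
          · -- T > m : bb T ≤ b / 2
            have hTgt : m < T := lt_of_le_of_ne hTge (fun h => hTm (h ▸ rfl))
            have h1 : (2:ℝ) ^ (m + 1) ≤ 2 ^ T := by
              apply pow_le_pow_right₀ (by norm_num : (1:ℝ) ≤ 2)
              omega
            have h2 : (0:ℝ) < 2 ^ (m+1) := by positivity
            have h3 : ((2:ℝ) ^ T)⁻¹ ≤ ((2:ℝ) ^ (m+1))⁻¹ :=
              inv_anti₀ (by positivity) h1
            have h4 : ((2:ℝ) ^ (m+1))⁻¹ = ((2:ℝ)^m)⁻¹ / 2 := by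
              rw [pow_succ, mul_inv]
              ring
            have h5 : bb T ≤ b / 2 := by
              rw [hbdef, bb, bb]
              rw [h4] at h3
              linarith
            have h6 : 0 < bb T := bb_pos T
            nlinarith
        have hb2 : b^2 ≤ 1 := by nlinarith
        have ht2 : t^2 ≤ b^2/64 := by
          nlinarith [mul_le_mul htle htle htnn (by positivity : (0:ℝ) ≤ b^2/8), hb2]
        have hkey : lam (gen m t) - lam (gen T t') ≥ δ := by
          rw [hΔ]
          have h1 : 4 * (b^2/4) ≤ C * (b - bb T)^2 := by
            nlinarith [mul_le_mul_of_nonneg_right hC4 (sq_nonneg (b - bb T)), hsq]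
          nlinarith [mul_nonneg (by linarith : (0:ℝ) ≤ 3*(k:ℝ)) (sq_nonneg (t - t')),
            sq_nonneg t', hδle, h1, ht2]
        linarith [hkey]
    · -- the cube
      have h0 : |p 0 - 0| ≤ dist p cb := coord_le_dist p cb 0
      have h1 : |p 1 - 2| ≤ dist p cb := coord_le_dist p cb 1
      have h2 : |p 2 - (-2)| ≤ dist p cb := coord_le_dist p cb 2
      rw [Metric.mem_closedBall] at hcube
      have hp0 : p 0 ≤ 1/4 := by
        have := abs_le.mp (le_trans h0 hcube)
        linarith [this.2]
      have hp0' : -(1/4) ≤ p 0 := by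
        have := abs_le.mp (le_trans h0 hcube)
        linarith [this.1]
      have hp1 : (7:ℝ)/4 ≤ p 1 := by
        have := abs_le.mp (le_trans h1 hcube)
        linarith [this.1]
      have hp2 : p 2 ≤ -(7/4) := by
        have := abs_le.mp (le_trans h2 hcube)
        linarith [this.2]
      have hterm1 : 2*b*C*(p 2) ≤ 0 := by
        apply mul_nonpos_of_nonneg_of_nonpos
        · positivity
        · linarith
      have hterm3 : 6*(k:ℝ)*t*(p 0) ≤ 6*(k:ℝ)*t*(1/4) := by
        apply mul_le_mul_of_nonneg_left hp0
        positivity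
      have htsmall : t ≤ 1/8 := by nlinarith
      have hlamp : lam p ≤ 0 := by
        have hterm2 : -(C * (p 1)) ≤ -(C * (7/4)) := by
          have := mul_le_mul_of_nonneg_left hp1 (by linarith : (0:ℝ) ≤ C)
          linarith
        have hterm4 : 6*(k:ℝ)*t*(1/4) ≤ 6*(k:ℝ)*(1/8)*(1/4) := by
          apply mul_le_mul_of_nonneg_right _ (by norm_num)
          apply mul_le_mul_of_nonneg_left htsmall (by positivity)
        simp only [hlam]
        nlinarith [hterm1, hterm2, hterm3, hterm4, hk1]
      have hq0 : 0 ≤ lam (gen m t) - δ := by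
        rw [hlamq]
        nlinarith [sq_nonneg t, hδle, hbpos]
      linarith
  -- the halfspace is convex and closed
  have hlin : IsLinearMap ℝ lam := by
    constructor
    · intro p q
      rw [hlam]
      simp only [add_apply]
      ring
    · intro c p
      rw [hlam]
      simp only [smul_apply, smul_eq_mul]
      ring
  have hcont : Continuous lam := (IsLinearMap.mk' lam hlin).continuous_of_finiteDimensional
  have hconv : Convex ℝ {p : E3 | lam p ≤ lam (gen m t) - δ} :=
    convex_halfSpace_le hlin _
  have hclosed : IsClosed {p : E3 | lam p ≤ lam (gen m t) - δ} :=
    isClosed_le hcont continuous_const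
  have hsub : KK ⊆ {p : E3 | lam p ≤ lam (gen m t) - δ} := by
    rw [KK]
    exact closure_minimal (convexHull_min hG hconv) hclosed
  have := hsub hq
  rw [Set.mem_setOf_eq] at this
  linarith

/- ### global properties of the body -/

lemma G_bounded : G ⊆ Metric.closedBall (0 : E3) 9 := by
  rintro p (⟨k', S', j, hjS', rfl⟩ | hcube)
  · rw [Metric.mem_closedBall]
    have h1 : 0 ≤ tval k' j := tval_nonneg k' j
    have h2 : tval k' j ≤ 1/8 := tval_le_eighth k' S' j
    have h3 : 0 < bb (gidx k' S') := bb_pos _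
    have h4 : bb (gidx k' S') ≤ 1 := bb_le_one _
    rw [EuclideanSpace.dist_eq]
    have h9 : (9:ℝ) = Real.sqrt 81 := by
      rw [show (81:ℝ) = 9^2 by norm_num, Real.sqrt_sq (by norm_num : (0:ℝ) ≤ 9)]
    rw [h9]
    apply Real.sqrt_le_sqrt
    rw [Fin.sum_univ_three]
    simp only [gen, pt_zero, pt_one, pt_two, zero_apply, Real.dist_eq, sub_zero, sq_abs]
    have e1 : tval k' j ^ 2 ≤ 1 := by nlinarith
    have e2 : bb (gidx k' S') ^ 2 ≤ 1 := by nlinarith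
    have e3 : (tval k' j ^ 2 + bb (gidx k' S') ^ 2) ^ 2 ≤ 4 := by
      nlinarith [e1, e2, sq_nonneg (tval k' j), sq_nonneg (bb (gidx k' S'))]
    linarith
  · rw [Metric.mem_closedBall]
    have htri : dist p 0 ≤ dist p cb + dist cb 0 := dist_triangle p cb 0
    rw [Metric.mem_closedBall] at hcube
    have hcb : dist cb (0:E3) ≤ 3 := by
      rw [EuclideanSpace.dist_eq]
      have h3 : (3:ℝ) = Real.sqrt 9 := by
        rw [show (9:ℝ) = 3^2 by norm_num, Real.sqrt_sq (by norm_num : (0:ℝ) ≤ 3)]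
      rw [h3]
      apply Real.sqrt_le_sqrt
      rw [Fin.sum_univ_three]
      simp only [cb, pt_zero, pt_one, pt_two, zero_apply, Real.dist_eq, sub_zero, sq_abs]
      norm_num
    linarith

lemma KK_compact : IsCompact KK := by
  have hsub : KK ⊆ Metric.closedBall (0 : E3) 9 := by
    rw [KK]
    exact closure_minimal
      (convexHull_min G_bounded (convex_closedBall _ _))
      Metric.isClosed_closedBall
  exact (isCompact_closedBall (0:E3) 9).of_isClosed_subset isClosed_closure hsub

lemma KK_convex : Convex ℝ KK := (convex_convexHull ℝ G).closure

lemma KK_interior : (interior KK).Nonempty := by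
  have hcube : Metric.closedBall cb (1/4) ⊆ KK :=
    subset_trans Set.subset_union_right
      (subset_trans (subset_convexHull ℝ G) subset_closure)
  refine ⟨cb, interior_mono hcube ?_⟩
  apply Metric.ball_subset_interior_closedBall
  exact Metric.mem_ball_self (by norm_num)

lemma VV_countable : VV.Countable := Set.countable_range _

end DualVCAux

open DualVCAux

/-- There exist a convex body `K ⊆ ℝ³` and a countable set `V ⊆ ℝ³` such that
the family of translates `{K + v : v ∈ V}` has infinite dual VC-dimension: for every `k`
there are distinct translation vectors `v 1, …, v k` in `V` such that for every subset `S`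
of the indices there is a point lying exactly in the translates with index in `S`. -/
theorem exists_translates_infinite_dual_vcdim :
    ∃ K : Set (EuclideanSpace ℝ (Fin 3)),
      IsCompact K ∧ Convex ℝ K ∧ (interior K).Nonempty ∧
      ∃ V : Set (EuclideanSpace ℝ (Fin 3)), V.Countable ∧
        ∀ k : ℕ, ∃ v : Fin k → EuclideanSpace ℝ (Fin 3),
          Function.Injective v ∧ (∀ i, v i ∈ V) ∧
          ∀ S : Finset (Fin k), ∃ x : EuclideanSpace ℝ (Fin 3),
            ∀ i : Fin k, x ∈ K + {v i} ↔ i ∈ S := by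
  refine ⟨KK, KK_compact, KK_convex, KK_interior, VV, VV_countable, ?_⟩
  intro k
  refine ⟨fun i => vpt k (i : ℕ), ?_, ?_, ?_⟩
  · -- injectivity
    intro i j h
    have h' : vpt k (i : ℕ) = vpt k (j : ℕ) := h
    have h0 : vpt k (i : ℕ) 0 = vpt k (j : ℕ) 0 := by rw [h']
    rw [vpt, vpt, pt_zero, pt_zero, neg_inj] at h0
    have hτ : tau k ≠ 0 := ne_of_gt (tau_pos k)
    have h1 : ((i : ℕ) : ℝ) + 1 = ((j : ℕ) : ℝ) + 1 := mul_right_cancel₀ hτ h0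
    have h2 : ((i : ℕ) : ℝ) = ((j : ℕ) : ℝ) := by linarith
    exact Fin.ext (by exact_mod_cast h2)
  · -- membership in V
    intro i
    exact ⟨((k : ℕ), (i : ℕ)), rfl⟩
  · -- the shattering
    intro S
    refine ⟨xx (gidx k S), ?_⟩
    intro i
    constructor
    · -- forward: membership implies i ∈ S
      intro hx
      by_contra hiS
      obtain ⟨a, ha, y, hy, hay⟩ := Set.mem_add.mp hx
      rw [Set.mem_singleton_iff] at hy
      subst hy
      have hgen : gen (gidx k S) (tval k i) + vpt k (i : ℕ) = xx (gidx k S) :=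
        gen_add_vpt k (gidx k S) i
      have haeq : a = gen (gidx k S) (tval k i) := by
        have := hay.trans hgen.symm
        exact add_right_cancel this
      exact exclusion k S i hiS (haeq ▸ ha)
    · -- backward: i ∈ S implies membership
      intro hiS
      have hgen : gen (gidx k S) (tval k i) + vpt k (i : ℕ) = xx (gidx k S) :=
        gen_add_vpt k (gidx k S) i
      rw [← hgen]
      exact Set.add_mem_add (gen_mem_KK k S i hiS) (Set.mem_singleton _)
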